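/- (Stationary water balance, finite capacity.) Assume p_0 > 0, p_0 + p_1 < 1, that μ_y := E[Y_0] < ∞, and that Z_0 is distributed according to the unique stationary probability distribution π of the transition matrix P (and is independent of (Y_n)). Then the mean inflow equals the long-run mean controlled release plus the long-run mean overflow loss per unit time: μ_y = ℙ(Z_0 + Y_0 ≥ 1) + E[(Z_0 + Y_0 − C)^+], where x^+ = max(x, 0). -/

import Mathlib

open scoped BigOperators
open MeasureTheory ProbabilityTheory Filter

/-- Transition matrix of the finite-capacity Moran storage chain on states `{0, …, C-1}`:
`P 0 0 = p 0 + p 1`, `P 0 j = p (j+1)` for `1 ≤ j ≤ C-2`, `P i j = p (j-i+1)` for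
`1 ≤ i ≤ C-1` and `i-1 ≤ j ≤ C-2`, `P i j = 0` for `j < i-1`, and
`P i (C-1) = h (C-i)` where `h k = ∑_{j ≥ k} p j`. -/
noncomputable def moranP (C : ℕ) (p : ℕ → ℝ) : Matrix (Fin C) (Fin C) ℝ :=
  Matrix.of fun i j =>
    if (j : ℕ) = C - 1 then ∑' k : ℕ, p (C - (i : ℕ) + k)
    else if (i : ℕ) = 0 ∧ (j : ℕ) = 0 then p 0 + p 1
    else if (i : ℕ) ≤ (j : ℕ) + 1 then p ((j : ℕ) + 1 - (i : ℕ))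
    else 0


/-- Expectation of a bounded ℕ-valued r.v. -/
lemma integral_nat_of_lt {Ω : Type} [MeasurableSpace Ω] (μ : Measure Ω) [IsProbabilityMeasure μ]
    (C : ℕ) (W : Ω → ℕ) (hW : Measurable W) (hlt : ∀ ω, W ω < C) :
    ∫ ω, (W ω : ℝ) ∂μ = ∑ i : Fin C, (i : ℝ) * (μ {ω | W ω = (i : ℕ)}).toReal := by
  have hms : ∀ i : Fin C, MeasurableSet {ω | W ω = (i : ℕ)} := fun i =>
    hW (measurableSet_singleton _)
  have hpt : ∀ ω, (W ω : ℝ)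
      = ∑ i : Fin C, Set.indicator {ω' | W ω' = (i : ℕ)} (fun _ => (i : ℝ)) ω := by
    intro ω
    rw [Finset.sum_eq_single (⟨W ω, hlt ω⟩ : Fin C)]
    · simp [Set.indicator]
    · intro b _ hb
      apply Set.indicator_of_notMem
      simp only [Set.mem_setOf_eq]
      intro h
      exact hb (Fin.ext h.symm)
    · intro h; exact absurd (Finset.mem_univ _) h
  rw [integral_congr_ae (ae_of_all _ hpt), integral_finset_sum]
  · refine Finset.sum_congr rfl fun i _ => ?_
    rw [integral_indicator_const _ (hms i), smul_eq_mul, mul_comm, measureReal_def]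
  · intro i _
    exact (integrable_const ((i : Fin C) : ℝ)).indicator (hms i)

/-- One-step transition probability matches the Moran matrix. -/
lemma moran_step {Ω : Type} [MeasurableSpace Ω] (μ : Measure Ω) [IsProbabilityMeasure μ]
    (C : ℕ) (hC : 2 ≤ C) (p : ℕ → ℝ) (Y0 : Ω → ℕ) (hY0 : Measurable Y0)
    (hYd : ∀ j, (μ {ω | Y0 ω = j}).toReal = p j) (i j : Fin C) :
    (μ {ω | min ((i : ℕ) + Y0 ω - 1) (C - 1) = (j : ℕ)}).toReal = moranP C p i j := by
  have hi := i.isLt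
  have hj := j.isLt
  by_cases hjC : (j : ℕ) = C - 1
  · -- tail case
    have hset : {ω | min ((i : ℕ) + Y0 ω - 1) (C - 1) = (j : ℕ)}
        = ⋃ k : ℕ, {ω | Y0 ω = C - (i : ℕ) + k} := by
      ext ω
      simp only [Set.mem_setOf_eq, Set.mem_iUnion]
      constructor
      · intro h
        refine ⟨Y0 ω - (C - (i : ℕ)), ?_⟩
        omega
      · rintro ⟨k, hk⟩
        omega
    rw [hset, measure_iUnion, ENNReal.tsum_toReal_eq (fun _ => measure_ne_top _ _)]
    · simp only [moranP, Matrix.of_apply, if_pos hjC]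
      exact tsum_congr fun k => hYd _
    · intro a b hab
      simp only [Set.disjoint_left, Set.mem_setOf_eq]
      intro ω h1 h2
      omega
    · exact fun k => hY0 (measurableSet_singleton _)
  · by_cases h00 : (i : ℕ) = 0 ∧ (j : ℕ) = 0
    · have hset : {ω | min ((i : ℕ) + Y0 ω - 1) (C - 1) = (j : ℕ)}
          = {ω | Y0 ω = 0} ∪ {ω | Y0 ω = 1} := by
        ext ω
        simp only [Set.mem_setOf_eq, Set.mem_union]
        omega
      rw [hset, measure_union, ENNReal.toReal_add (measure_ne_top _ _) (measure_ne_top _ _),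
        hYd, hYd]
      · simp only [moranP, Matrix.of_apply, if_neg hjC, if_pos h00]
      · simp only [Set.disjoint_left, Set.mem_setOf_eq]
        intro ω h1 h2; omega
      · exact hY0 (measurableSet_singleton _)
    · by_cases hle : (i : ℕ) ≤ (j : ℕ) + 1
      · have hset : {ω | min ((i : ℕ) + Y0 ω - 1) (C - 1) = (j : ℕ)}
            = {ω | Y0 ω = (j : ℕ) + 1 - (i : ℕ)} := by
          ext ω
          simp only [Set.mem_setOf_eq]
          omega
        rw [hset, hYd]
        simp only [moranP, Matrix.of_apply, if_neg hjC, if_neg h00, if_pos hle]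
      · have hset : {ω | min ((i : ℕ) + Y0 ω - 1) (C - 1) = (j : ℕ)} = (∅ : Set Ω) := by
          ext ω
          simp only [Set.mem_setOf_eq, Set.mem_empty_iff_false, iff_false]
          omega
        rw [hset]
        simp only [moranP, Matrix.of_apply, if_neg hjC, if_neg h00, if_neg hle,
          measure_empty, ENNReal.toReal_zero]

/-- stationary water balance in the finite-capacity case: if `Z 0` is distributed
according to the stationary distribution `π`, the mean inflow equals the long-run mean
controlled release plus the long-run mean overflow loss per unit time. -/
theorem stmt3
    {Ω : Type} [MeasurableSpace Ω] (μ : Measure Ω) [IsProbabilityMeasure μ]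
    (C : ℕ) (hC : 2 ≤ C) (p : ℕ → ℝ) (hpnn : ∀ j, 0 ≤ p j) (hpsum : HasSum p 1)
    (Y Z : ℕ → Ω → ℕ)
    (hYmeas : ∀ n, Measurable (Y n)) (hZ0meas : Measurable (Z 0))
    (hYdist : ∀ n j, (μ {ω | Y n ω = j}).toReal = p j)
    (hIndep : iIndepFun
      (fun i : Option ℕ => i.elim (Z 0) Y) μ)
    (hZ0lt : ∀ ω, Z 0 ω < C)
    (hrec : ∀ n ω, Z (n + 1) ω = min (Z n ω + Y n ω - 1) (C - 1))
    (hp0 : 0 < p 0) (hp01 : p 0 + p 1 < 1)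
    (hYint : Integrable (fun ω => (Y 0 ω : ℝ)) μ)
    (π : Fin C → ℝ) (hπnn : ∀ i, 0 ≤ π i) (hπ1 : ∑ i, π i = 1)
    (hπP : Matrix.vecMul π (moranP C p) = π)
    (hZ0dist : ∀ i : Fin C, (μ {ω | Z 0 ω = (i : ℕ)}).toReal = π i) :
    ∫ ω, (Y 0 ω : ℝ) ∂μ
      = (μ {ω | 1 ≤ Z 0 ω + Y 0 ω}).toReal
        + ∫ ω, max ((Z 0 ω : ℝ) + (Y 0 ω : ℝ) - (C : ℝ)) 0 ∂μ := by
  have hY0 : Measurable (Y 0) := hYmeas 0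
  have hindep01 : IndepFun (Z 0) (Y 0) μ := by
    have := hIndep.indepFun (i := none) (j := some 0) (by simp)
    exact this
  -- distribution of Z 1
  have hZ1dist : ∀ j : Fin C, (μ {ω | Z 1 ω = (j : ℕ)}).toReal = π j := by
    intro j
    have hset : {ω | Z 1 ω = (j : ℕ)}
        = ⋃ i : Fin C, ((Z 0) ⁻¹' {(i : ℕ)} ∩ (Y 0) ⁻¹' {y | min ((i : ℕ) + y - 1) (C - 1) = (j : ℕ)}) := by
      ext ω
      simp only [Set.mem_setOf_eq, Set.mem_iUnion, Set.mem_inter_iff, Set.mem_preimage,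
        Set.mem_singleton_iff, hrec 0 ω]
      constructor
      · intro h
        exact ⟨⟨Z 0 ω, hZ0lt ω⟩, rfl, h⟩
      · rintro ⟨i, hi, h⟩
        rw [← hi] at h; exact h
    rw [hset, measure_iUnion, tsum_fintype, ENNReal.toReal_sum (fun a _ => measure_ne_top _ _)]
    · have key : ∀ i : Fin C,
          (μ ((Z 0) ⁻¹' {(i : ℕ)} ∩ (Y 0) ⁻¹' {y | min ((i : ℕ) + y - 1) (C - 1) = (j : ℕ)})).toReal
          = π i * moranP C p i j := by
        intro i
        rw [hindep01.measure_inter_preimage_eq_mul _ _ (measurableSet_singleton _)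
          (MeasurableSet.of_discrete), ENNReal.toReal_mul]
        have h1 : (μ ((Z 0) ⁻¹' {(i:ℕ)})).toReal = π i := hZ0dist i
        have h2 : (μ ((Y 0) ⁻¹' {y | min ((i : ℕ) + y - 1) (C - 1) = (j : ℕ)})).toReal
            = moranP C p i j := moran_step μ C hC p (Y 0) hY0 (hYdist 0) i j
        rw [h1, h2]
      rw [Finset.sum_congr rfl (fun i _ => key i)]
      have := congrFun hπP j
      rw [← this]
      simp [Matrix.vecMul, dotProduct]
    · intro a b hab
      simp only [Set.disjoint_left, Set.mem_inter_iff, Set.mem_preimage, Set.mem_singleton_iff]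
      rintro ω ⟨h1, -⟩ ⟨h2, -⟩
      exact hab (Fin.ext (h1 ▸ h2.symm ▸ rfl))
    · exact fun i => (hZ0meas (measurableSet_singleton _)).inter (hY0 MeasurableSet.of_discrete)
  -- measurability and boundedness of Z 1
  have hZ1eq : Z 1 = fun ω => min (Z 0 ω + Y 0 ω - 1) (C - 1) := funext (hrec 0)
  have hZ1meas : Measurable (Z 1) := by
    rw [hZ1eq]
    exact ((hZ0meas.add hY0).sub measurable_const).min measurable_const
  have hZ1lt : ∀ ω, Z 1 ω < C := by
    intro ω; rw [hrec 0 ω]; omega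
  -- equality of means of Z 0 and Z 1
  have hmean : ∫ ω, (Z 1 ω : ℝ) ∂μ = ∫ ω, (Z 0 ω : ℝ) ∂μ := by
    rw [integral_nat_of_lt μ C (Z 1) hZ1meas hZ1lt,
      integral_nat_of_lt μ C (Z 0) hZ0meas hZ0lt]
    exact Finset.sum_congr rfl fun i _ => by rw [hZ1dist i, hZ0dist i]
  -- integrability facts
  have hZint : ∀ (W : Ω → ℕ), Measurable W → (∀ ω, W ω < C) →
      Integrable (fun ω => (W ω : ℝ)) μ := by
    intro W hW hlt
    refine (integrable_const (C : ℝ)).mono' ?_ (ae_of_all _ fun ω => ?_)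
    · exact (measurable_from_top.comp hW).aestronglyMeasurable
    · rw [Real.norm_eq_abs, abs_of_nonneg (by positivity)]
      exact_mod_cast (hlt ω).le
  have hZ0int := hZint (Z 0) hZ0meas hZ0lt
  have hZ1int := hZint (Z 1) hZ1meas hZ1lt
  have hSmeas : MeasurableSet {ω | 1 ≤ Z 0 ω + Y 0 ω} := by
    have : {ω | 1 ≤ Z 0 ω + Y 0 ω} = (fun ω => Z 0 ω + Y 0 ω) ⁻¹' {n | 1 ≤ n} :=
      rfl
    rw [this]
    exact (hZ0meas.add hY0) MeasurableSet.of_discrete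
  have hindint : Integrable
      (Set.indicator {ω | 1 ≤ Z 0 ω + Y 0 ω} (fun _ => (1 : ℝ))) μ :=
    (integrable_const (1 : ℝ)).indicator hSmeas
  -- max term equals cast of truncated subtraction
  have hmax : ∀ ω, max ((Z 0 ω : ℝ) + (Y 0 ω : ℝ) - (C : ℝ)) 0
      = ((Z 0 ω + Y 0 ω - C : ℕ) : ℝ) := by
    intro ω
    rcases le_total C (Z 0 ω + Y 0 ω) with h | h
    · rw [max_eq_left, Nat.cast_sub h]
      · push_cast
        rfl
      · have : (C : ℝ) ≤ (Z 0 ω : ℝ) + (Y 0 ω : ℝ) := by exact_mod_cast h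
        linarith
    · have h0 : Z 0 ω + Y 0 ω - C = 0 := by omega
      rw [h0, max_eq_right]
      · simp
      · have : (Z 0 ω : ℝ) + (Y 0 ω : ℝ) ≤ (C : ℝ) := by exact_mod_cast h
        linarith
  have hmaxint : Integrable (fun ω => max ((Z 0 ω : ℝ) + (Y 0 ω : ℝ) - (C : ℝ)) 0) μ := by
    refine hYint.mono' ?_ (ae_of_all _ fun ω => ?_)
    · exact (((((measurable_from_top.comp hZ0meas).add
        (measurable_from_top.comp hY0)).sub measurable_const)).max
        measurable_const).aestronglyMeasurable
    · rw [hmax ω, Real.norm_eq_abs, abs_of_nonneg (by positivity)]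
      have : Z 0 ω + Y 0 ω - C ≤ Y 0 ω := by have := hZ0lt ω; omega
      exact_mod_cast this
  -- pointwise balance identity
  have hpt : ∀ ω, (Z 0 ω : ℝ) + (Y 0 ω : ℝ)
      = (Z 1 ω : ℝ) + Set.indicator {ω' | 1 ≤ Z 0 ω' + Y 0 ω'} (fun _ => (1 : ℝ)) ω
        + max ((Z 0 ω : ℝ) + (Y 0 ω : ℝ) - (C : ℝ)) 0 := by
    intro ω
    rw [hmax ω, hrec 0 ω, Set.indicator_apply]
    simp only [Set.mem_setOf_eq]
    by_cases h : 1 ≤ Z 0 ω + Y 0 ω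
    · rw [if_pos h]
      have h2 : Z 0 ω + Y 0 ω
          = min (Z 0 ω + Y 0 ω - 1) (C - 1) + 1 + (Z 0 ω + Y 0 ω - C) := by omega
      exact_mod_cast congrArg (Nat.cast : ℕ → ℝ) h2
    · rw [if_neg h]
      have h2 : Z 0 ω + Y 0 ω
          = min (Z 0 ω + Y 0 ω - 1) (C - 1) + (Z 0 ω + Y 0 ω - C) := by omega
      exact_mod_cast congrArg (Nat.cast : ℕ → ℝ) h2
  -- integrate the balance identity
  have hint_eq : ∫ ω, ((Z 0 ω : ℝ) + (Y 0 ω : ℝ)) ∂μ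
      = ∫ ω, (Z 1 ω : ℝ) ∂μ + (μ {ω | 1 ≤ Z 0 ω + Y 0 ω}).toReal
        + ∫ ω, max ((Z 0 ω : ℝ) + (Y 0 ω : ℝ) - (C : ℝ)) 0 ∂μ := by
    have i12 : Integrable (fun ω => (Z 1 ω : ℝ)
        + Set.indicator {ω' | 1 ≤ Z 0 ω' + Y 0 ω'} (fun _ => (1 : ℝ)) ω) μ :=
      hZ1int.add hindint
    rw [integral_congr_ae (ae_of_all _ hpt), integral_add i12 hmaxint,
      integral_add hZ1int hindint, integral_indicator_const _ hSmeas, smul_eq_mul, mul_one, measureReal_def]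
  rw [integral_add hZ0int hYint, hmean] at hint_eq
  linarith
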